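/- For all natural numbers m and n there exists a polynomial Q with nonnegative real coefficients, depending only on m and n, with the following property: for every m×n integer matrix A and every b ∈ ℤ^m, if the linear system A z = b has a solution z ∈ ℤⁿ, then it has a solution z ∈ ℤⁿ satisfying max_i |z_i| ≤ Q(H), where H is the maximum of the absolute values of the entries of A and of b. (Polynomial bound on integral solutions of integer linear systems, used in the proof of Proposition 2.1.1(i).) -/

import Mathlib

open Matrix Finset

variable {m : ℕ}

-- mulVec entry bound
lemma mulVec_entry_bound {ι κ : Type*} [Fintype ι] [Fintype κ] (M : Matrix ι κ ℤ) (v : κ → ℤ)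
    {x y : ℤ} (hM : ∀ i j, |M i j| ≤ x) (hv : ∀ j, |v j| ≤ y) (hy : 0 ≤ y) (i : ι) :
    |(M *ᵥ v) i| ≤ (Fintype.card κ : ℤ) * (x * y) := by
  calc |(M *ᵥ v) i| ≤ ∑ j, |M i j * v j| := Finset.abs_sum_le_sum_abs _ _
    _ ≤ ∑ _j : κ, x * y := by
        refine Finset.sum_le_sum fun j _ => ?_
        rw [abs_mul]
        exact mul_le_mul (hM i j) (hv j) (abs_nonneg _) ((abs_nonneg _).trans (hM i j))
    _ = (Fintype.card κ : ℤ) * (x * y) := by simp [mul_comm, Finset.card_univ]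

-- det bound over ℤ
lemma det_abs_le {ι : Type*} [Fintype ι] [DecidableEq ι] (M : Matrix ι ι ℤ) {x : ℤ}
    (hM : ∀ i j, |M i j| ≤ x) :
    |M.det| ≤ (Nat.factorial (Fintype.card ι) : ℤ) * x ^ Fintype.card ι := by
  have := Matrix.det_le (A := M) (abv := AbsoluteValue.abs) (x := x) hM
  simpa [nsmul_eq_mul] using this

-- adjugate entry bound
lemma adjugate_abs_le {ι : Type*} [Fintype ι] [DecidableEq ι] (M : Matrix ι ι ℤ) {x : ℤ}
    (hM : ∀ i j, |M i j| ≤ x) (hx : 0 ≤ x) (i j : ι) :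
    |M.adjugate i j| ≤ (Nat.factorial (Fintype.card ι) : ℤ) * (x + 1) ^ Fintype.card ι := by
  rw [Matrix.adjugate_apply]
  refine det_abs_le _ fun a b => ?_
  rcases eq_or_ne a j with rfl | h
  · simp only [Matrix.updateRow_self]
    rcases eq_or_ne b i with rfl | h2
    · simp [Pi.single_apply]; linarith
    · simp [Pi.single_apply, h2]; linarith
  · rw [Matrix.updateRow_ne h]
    exact (hM a b).trans (by linarith)

-- gram det nonzero
lemma gram_det_ne_zero {ι : Type*} [Fintype ι] [DecidableEq ι] (M : Matrix (Fin m) ι ℚ)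
    (h : ∀ v : ι → ℚ, M *ᵥ v = 0 → v = 0) : (Mᵀ * M).det ≠ 0 := by
  intro h0
  obtain ⟨v, hv, hGv⟩ := (Matrix.exists_mulVec_eq_zero_iff).mpr h0
  apply hv
  apply h
  have := congr_arg (dotProduct v) hGv
  rwa [← Matrix.mulVec_mulVec, dotProduct_mulVec, dotProduct_zero,
    Matrix.vecMul_transpose, dotProduct_self_eq_zero] at this

lemma mul_entry_abs_le {ι κ ι' : Type*} [Fintype κ] (M : Matrix ι κ ℤ) (N : Matrix κ ι' ℤ)
    {x y : ℤ} (hM : ∀ i j, |M i j| ≤ x) (hN : ∀ i j, |N i j| ≤ y) (i : ι) (j : ι') :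
    |(M * N) i j| ≤ (Fintype.card κ : ℤ) * (x * y) := by
  rw [Matrix.mul_apply]
  calc |∑ k, M i k * N k j| ≤ ∑ k, |M i k * N k j| := Finset.abs_sum_le_sum_abs _ _
    _ ≤ ∑ _k : κ, x * y := by
        refine Finset.sum_le_sum fun k _ => ?_
        rw [abs_mul]
        exact mul_le_mul (hM i k) (hN k j) (abs_nonneg _) ((abs_nonneg _).trans (hM i k))
    _ = (Fintype.card κ : ℤ) * (x * y) := by simp [mul_comm, Finset.card_univ]

lemma fullrank_bound {n' : ℕ} (A : Matrix (Fin m) (Fin n') ℤ) (b z : _)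
    (hz : A *ᵥ z = b)
    (hind : ∀ v : Fin n' → ℚ, (A.map (Int.cast : ℤ → ℚ)) *ᵥ v = 0 → v = 0)
    {H : ℤ} (hA : ∀ i j, |A i j| ≤ H) (hb : ∀ i, |b i| ≤ H) (hH : 0 ≤ H) :
    ∀ i, |z i| ≤ (n' * n'.factorial : ℤ) * (m * H ^ 2 + 1) ^ (n' + 1) := by
  set G : Matrix (Fin n') (Fin n') ℤ := Aᵀ * A with hG
  set Aq := A.map (Int.cast : ℤ → ℚ) with hAq
  have hmapG : G.map (Int.cast : ℤ → ℚ) = Aqᵀ * Aq := by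
    ext i j
    simp only [Matrix.map_apply, hG, hAq, Matrix.mul_apply, Matrix.transpose_apply]
    push_cast
    rfl
  have hdet : G.det ≠ 0 := by
    intro h0
    have : (Aqᵀ * Aq).det = 0 := by
      rw [← hmapG]
      have : (G.map (Int.cast : ℤ → ℚ)).det = ((G.det : ℚ)) := by
        have := RingHom.map_det (Int.castRingHom ℚ) G
        simpa using this.symm
      rw [this, h0]
      simp
    exact gram_det_ne_zero Aq hind this
  have hdet1 : 1 ≤ |G.det| := by
    have := abs_pos.mpr hdet
    omega
  -- key identity
  have key : G.adjugate *ᵥ (Aᵀ *ᵥ b) = G.det • z := by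
    have h1 : Aᵀ *ᵥ (A *ᵥ z) = G *ᵥ z := by rw [Matrix.mulVec_mulVec]
    rw [← hz, h1, Matrix.mulVec_mulVec, Matrix.adjugate_mul, Matrix.smul_mulVec,
      Matrix.one_mulVec]
  -- bounds
  have hGe : ∀ i j, |G i j| ≤ (m : ℤ) * H ^ 2 := by
    intro i j
    have := mul_entry_abs_le Aᵀ A (x := H) (y := H) (fun i j => hA j i) hA i j
    simpa [sq] using this
  have hAb : ∀ i, |(Aᵀ *ᵥ b) i| ≤ (m : ℤ) * H ^ 2 := by
    intro i
    have := mulVec_entry_bound Aᵀ b (x := H) (y := H) (fun i j => hA j i) hb hH i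
    simpa [sq] using this
  have hadj : ∀ i j, |G.adjugate i j| ≤ (n'.factorial : ℤ) * ((m : ℤ) * H ^ 2 + 1) ^ n' := by
    intro i j
    have := adjugate_abs_le G hGe (by positivity) i j
    simpa using this
  intro i
  have h1 : |(G.adjugate *ᵥ (Aᵀ *ᵥ b)) i| ≤
      (n' : ℤ) * ((n'.factorial : ℤ) * ((m : ℤ) * H ^ 2 + 1) ^ n' * ((m : ℤ) * H ^ 2)) := by
    have := mulVec_entry_bound G.adjugate (Aᵀ *ᵥ b)
      (x := (n'.factorial : ℤ) * ((m : ℤ) * H ^ 2 + 1) ^ n') (y := (m : ℤ) * H ^ 2)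
      hadj hAb (by positivity) i
    simpa [mul_assoc] using this
  have h2 : |z i| ≤ |G.det| * |z i| := by
    nlinarith [abs_nonneg (z i)]
  have h3 : |G.det| * |z i| = |(G.adjugate *ᵥ (Aᵀ *ᵥ b)) i| := by
    rw [key, Pi.smul_apply, smul_eq_mul, abs_mul]
  have hE : (0:ℤ) ≤ (m : ℤ) * H ^ 2 + 1 := by positivity
  calc |z i| ≤ (n' : ℤ) * ((n'.factorial : ℤ) * ((m : ℤ) * H ^ 2 + 1) ^ n' * ((m : ℤ) * H ^ 2)) := by
        rw [h3] at h2; exact h2.trans h1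
    _ = ((n' : ℤ) * (n'.factorial : ℤ) * ((m : ℤ) * H ^ 2 + 1) ^ n') * ((m : ℤ) * H ^ 2) := by
        ring
    _ ≤ ((n' : ℤ) * (n'.factorial : ℤ) * ((m : ℤ) * H ^ 2 + 1) ^ n') * ((m : ℤ) * H ^ 2 + 1) := by
        refine mul_le_mul_of_nonneg_left (by linarith) (by positivity)
    _ = (n' * n'.factorial : ℤ) * ((m : ℤ) * H ^ 2 + 1) ^ (n' + 1) := by
        rw [pow_succ]; push_cast; ring

-- cast of mulVec
lemma cast_mulVec {ι κ : Type*} [Fintype κ] (M : Matrix ι κ ℤ) (v : κ → ℤ) (i : ι) :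
    (((M *ᵥ v) i : ℤ) : ℚ) = ((M.map (Int.cast : ℤ → ℚ)) *ᵥ (fun j => ((v j : ℤ) : ℚ))) i := by
  simp [Matrix.mulVec, dotProduct, Matrix.map_apply]

lemma sum_of_support {ι M : Type*} [Fintype ι] [AddCommMonoid M] (s : Finset ι) (f : ι → M)
    (hf : ∀ j ∉ s, f j = 0) : ∑ j : ↥s, f ↑j = ∑ j, f j := by
  rw [Finset.sum_coe_sort]
  exact Finset.sum_subset (Finset.subset_univ s) fun x _ hx => hf x hx

lemma small_kernel {n' : ℕ} (A : Matrix (Fin m) (Fin n') ℤ)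
    (c : Fin n' → ℚ) (hc : c ≠ 0) (hAc : (A.map (Int.cast : ℤ → ℚ)) *ᵥ c = 0)
    {H : ℤ} (hA : ∀ i j, |A i j| ≤ H) (hH : 0 ≤ H) :
    ∃ w : Fin n' → ℤ, ∃ j0 : Fin n', w j0 ≠ 0 ∧ A *ᵥ w = 0 ∧
      ∀ j, |w j| ≤ ((n' + 1) * n'.factorial : ℤ) * ((m : ℤ) * H ^ 2 + 1) ^ (n' + 1) := by
  classical
  set Aq := A.map (Int.cast : ℤ → ℚ) with hAqdef
  set Indep : Finset (Fin n') → Prop :=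
    fun s => ∀ g : Fin n' → ℚ, (∀ j ∉ s, g j = 0) → Aq *ᵥ g = 0 → g = 0 with hIndep
  -- choose maximal independent finset
  have hT : (Finset.univ.filter Indep : Finset (Finset (Fin n'))).Nonempty := by
    refine ⟨∅, Finset.mem_filter.mpr ⟨Finset.mem_univ _, fun g hg _ => funext fun j => hg j (by simp)⟩⟩
  obtain ⟨s, hs, hsmax⟩ := Finset.exists_max_image _ Finset.card hT
  have hsI : Indep s := (Finset.mem_filter.mp hs).2
  -- s ≠ univ
  have hsne : s ≠ Finset.univ := by
    rintro rfl
    exact hc (hsI c (fun j hj => absurd (Finset.mem_univ j) hj) hAc)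
  obtain ⟨j0, hj0⟩ : ∃ j0, j0 ∉ s := by
    by_contra h
    push_neg at h
    exact hsne (Finset.eq_univ_iff_forall.mpr h)
  -- insert j0 s is dependent
  have hdep : ¬ Indep (insert j0 s) := by
    intro hI
    have : (insert j0 s) ∈ Finset.univ.filter Indep := Finset.mem_filter.mpr ⟨Finset.mem_univ _, hI⟩
    have hcard := hsmax _ this
    rw [Finset.card_insert_of_notMem hj0] at hcard
    omega
  rw [hIndep] at hdep
  obtain ⟨g, hg⟩ := not_forall.mp hdep
  rw [_root_.not_imp, _root_.not_imp] at hg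
  obtain ⟨hgsupp, hgker, hgne⟩ := hg
  have hgj0 : g j0 ≠ 0 := by
    intro h0
    apply hgne
    refine hsI g (fun j hj => ?_) hgker
    rcases eq_or_ne j j0 with rfl | hne
    · exact h0
    · exact hgsupp j (by simp [hne, hj])
  -- the rational combination
  set x : Fin n' → ℚ := fun j => if j = j0 then 0 else -g j / g j0 with hx
  have hxsupp : ∀ j ∉ s, x j = 0 := by
    intro j hj
    rcases eq_or_ne j j0 with rfl | hne
    · simp [hx]
    · have : g j = 0 := hgsupp j (by simp [hne, hj])
      simp [hx, hne, this]
  have hgdecomp : g = g j0 • (Pi.single j0 1 - x) := by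
    funext j
    rcases eq_or_ne j j0 with rfl | hne
    · simp [hx]
    · simp [hx, hne, Pi.single_apply, Pi.smul_apply]
      field_simp
  have hAx : Aq *ᵥ x = fun i => Aq i j0 := by
    have h1 : Aq *ᵥ g = g j0 • (Aq *ᵥ (Pi.single j0 1) - Aq *ᵥ x) := by
      conv_lhs => rw [hgdecomp]
      rw [Matrix.mulVec_smul, Matrix.mulVec_sub]
    rw [hgker] at h1
    have h2 : Aq *ᵥ (Pi.single j0 1) - Aq *ᵥ x = 0 := by
      rcases smul_eq_zero.mp h1.symm with h | h
      · exact absurd h hgj0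
      · exact h
    have h3 : Aq *ᵥ x = Aq *ᵥ (Pi.single j0 1) := by
      have := sub_eq_zero.mp h2
      exact this.symm
    rw [h3, Matrix.mulVec_single]
    funext i
    simp
  -- restricted matrices over the subtype
  set As : Matrix (Fin m) ↥s ℤ := Matrix.of (fun i (j : ↥s) => A i (j : Fin n')) with hAs
  set Asq : Matrix (Fin m) ↥s ℚ := Matrix.of (fun i (j : ↥s) => Aq i (j : Fin n')) with hAsq2
  set xs : ↥s → ℚ := fun j => x (j : Fin n') with hxs
  have hAsx : Asq *ᵥ xs = fun i => Aq i j0 := by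
    funext i
    rw [← congr_fun hAx i]
    show ∑ j : ↥s, Aq i (↑j) * x ↑j = ∑ j, Aq i j * x j
    exact sum_of_support s (fun j => Aq i j * x j)
      (fun j hj => mul_eq_zero_of_right _ (hxsupp j hj))
  set Gs : Matrix ↥s ↥s ℤ := Asᵀ * As with hGs
  have hGsq : Gs.map (Int.cast : ℤ → ℚ) = Asqᵀ * Asq := by
    ext i j
    simp only [Matrix.map_apply, hGs, Matrix.mul_apply, Matrix.transpose_apply, hAs, hAsq2,
      Matrix.of_apply, hAqdef, Matrix.map_apply]
    push_cast
    rfl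
  have hinj : ∀ v : ↥s → ℚ, Asq *ᵥ v = 0 → v = 0 := by
    intro v hv
    set vext : Fin n' → ℚ := fun j => if h : j ∈ s then v ⟨j, h⟩ else 0 with hvext
    have hvsupp : ∀ j ∉ s, vext j = 0 := fun j hj => by simp [hvext, hj]
    have h1 : Aq *ᵥ vext = 0 := by
      funext i
      have e1 : ∑ j : ↥s, Aq i (↑j) * vext ↑j = ∑ j, Aq i j * vext j :=
        sum_of_support s (fun j => Aq i j * vext j)
          (fun j hj => mul_eq_zero_of_right _ (hvsupp j hj))
      have e2 : ∀ j : ↥s, vext ↑j = v j := fun j => by simp [hvext, j.2]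
      have : (Aq *ᵥ vext) i = (Asq *ᵥ v) i := by
        show ∑ j, Aq i j * vext j = ∑ j : ↥s, Aq i (↑j) * v j
        rw [← e1]
        exact Finset.sum_congr rfl fun j _ => by rw [e2]
      rw [this, hv]
    have h2 := hsI vext hvsupp h1
    funext j
    have : vext ↑j = 0 := by rw [h2]; rfl
    simpa [hvext, j.2] using this
  have hdetq : (Asqᵀ * Asq).det ≠ 0 := gram_det_ne_zero Asq hinj
  have hdet : Gs.det ≠ 0 := by
    intro h0
    apply hdetq
    rw [← hGsq]
    have := RingHom.map_det (Int.castRingHom ℚ) Gs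
    have e : (Gs.map (Int.cast : ℤ → ℚ)).det = ((Gs.det : ℚ)) := by simpa using this.symm
    rw [e, h0]
    simp
  -- the integer vector
  set u : ↥s → ℤ := Asᵀ *ᵥ (fun i => A i j0) with hu
  set p : ↥s → ℤ := Gs.adjugate *ᵥ u with hp
  have hpq : ∀ j : ↥s, ((p j : ℤ) : ℚ) = (Gs.det : ℚ) * xs j := by
    have huq : (fun j => ((u j : ℤ) : ℚ)) = Asqᵀ *ᵥ (fun i => Aq i j0) := by
      funext j
      rw [hu, cast_mulVec]
      show ∑ i, (Asᵀ.map (Int.cast : ℤ → ℚ)) j i * ((A i j0 : ℤ) : ℚ) = ∑ i, Asqᵀ j i * Aq i j0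
      refine Finset.sum_congr rfl fun a _ => ?_
      simp [hAs, hAsq2, hAqdef, Matrix.map_apply]
    have hadjq : (Gs.adjugate).map (Int.cast : ℤ → ℚ) = (Asqᵀ * Asq).adjugate := by
      rw [← hGsq]
      have := RingHom.map_adjugate (Int.castRingHom ℚ) Gs
      simpa using this
    intro j
    have e1 : ((p j : ℤ) : ℚ) = (((Gs.adjugate).map (Int.cast : ℤ → ℚ)) *ᵥ (fun j => ((u j : ℤ) : ℚ))) j := by
      rw [hp, cast_mulVec]
    rw [e1, hadjq, huq, ← hAsx]
    have e2 : Asqᵀ *ᵥ (Asq *ᵥ xs) = (Asqᵀ * Asq) *ᵥ xs := by rw [Matrix.mulVec_mulVec]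
    rw [e2]
    have e3 : (Asqᵀ * Asq).adjugate *ᵥ ((Asqᵀ * Asq) *ᵥ xs) = ((Asqᵀ * Asq).det) • xs := by
      rw [Matrix.mulVec_mulVec, Matrix.adjugate_mul, Matrix.smul_mulVec, Matrix.one_mulVec]
    rw [e3]
    have e4 : (Asqᵀ * Asq).det = ((Gs.det : ℚ)) := by
      rw [← hGsq]
      have := RingHom.map_det (Int.castRingHom ℚ) Gs
      simpa using this.symm
    rw [e4]
    rfl
  set w : Fin n' → ℤ := fun j => if j = j0 then Gs.det else if h : j ∈ s then -(p ⟨j, h⟩) else 0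
    with hw
  refine ⟨w, j0, ?_, ?_, ?_⟩
  · simp [hw, hdet]
  · -- A *ᵥ w = 0
    funext i
    have key : ((((A *ᵥ w) i : ℤ)) : ℚ) = 0 := by
      rw [cast_mulVec]
      show ∑ j, Aq i j * ((w j : ℤ) : ℚ) = 0
      have hsub : (insert j0 s : Finset (Fin n')) ⊆ Finset.univ := Finset.subset_univ _
      rw [← Finset.sum_subset hsub (fun j _ hj => by
        have : w j = 0 := by
          simp only [hw]
          rw [if_neg (by rintro rfl; exact hj (Finset.mem_insert_self _ _)),
            dif_neg (fun hmem => hj (Finset.mem_insert_of_mem hmem))]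
        rw [this]; simp)]
      rw [Finset.sum_insert hj0]
      have ej0 : ((w j0 : ℤ) : ℚ) = (Gs.det : ℚ) := by simp [hw]
      have es : ∑ j ∈ s, Aq i j * ((w j : ℤ) : ℚ) = ∑ j : ↥s, Aq i ↑j * (-(((p j : ℤ) : ℚ))) := by
        rw [← Finset.sum_coe_sort s (fun j => Aq i j * ((w j : ℤ) : ℚ))]
        refine Finset.sum_congr rfl fun j _ => ?_
        have hjne : (↑j : Fin n') ≠ j0 := by rintro h; exact hj0 (h ▸ j.2)
        have : w ↑j = -(p j) := by simp [hw, hjne, j.2]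
        rw [this]
        push_cast
        ring
      rw [ej0, es]
      have : ∑ j : ↥s, Aq i ↑j * (-(((p j : ℤ) : ℚ))) = -((Gs.det : ℚ)) * ∑ j : ↥s, Aq i ↑j * xs j := by
        rw [Finset.mul_sum]
        refine Finset.sum_congr rfl fun j _ => ?_
        rw [hpq j]
        ring
      rw [this]
      have : ∑ j : ↥s, Aq i ↑j * xs j = Aq i j0 := by
        have := congr_fun hAsx i
        exact this
      rw [this]
      ring
    exact_mod_cast key
  · -- bounds
    set E : ℤ := (m : ℤ) * H ^ 2 + 1 with hE
    have hE1 : (1 : ℤ) ≤ E := by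
      rw [hE]
      have : (0:ℤ) ≤ (m : ℤ) * H ^ 2 := by positivity
      linarith
    have hcard : Fintype.card ↥s ≤ n' := by
      rw [Fintype.card_coe]
      calc s.card ≤ (Finset.univ : Finset (Fin n')).card := Finset.card_le_univ s
        _ = n' := by simp
    have hGe : ∀ a b, |Gs a b| ≤ (m : ℤ) * H ^ 2 := by
      intro a b
      have := mul_entry_abs_le Asᵀ As (x := H) (y := H)
        (fun a b => hA _ _) (fun a b => hA _ _) a b
      simpa [sq, Fintype.card_fin] using this
    have hdetb : |Gs.det| ≤ (n'.factorial : ℤ) * E ^ n' := by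
      have h1 := det_abs_le Gs hGe
      have h2 : ((Fintype.card ↥s).factorial : ℤ) * ((m : ℤ) * H ^ 2) ^ Fintype.card ↥s ≤
          (n'.factorial : ℤ) * E ^ n' := by
        have f1 : ((Fintype.card ↥s).factorial : ℤ) ≤ (n'.factorial : ℤ) := by
          exact_mod_cast Nat.factorial_le hcard
        have f2 : ((m : ℤ) * H ^ 2) ^ Fintype.card ↥s ≤ E ^ n' := by
          calc ((m : ℤ) * H ^ 2) ^ Fintype.card ↥s ≤ E ^ Fintype.card ↥s := by
                refine pow_le_pow_left₀ (by positivity) (by rw [hE]; linarith) _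
            _ ≤ E ^ n' := pow_le_pow_right₀ hE1 hcard
        have : (0 : ℤ) ≤ ((m : ℤ) * H ^ 2) ^ Fintype.card ↥s := by positivity
        exact mul_le_mul f1 f2 this (by positivity)
      exact h1.trans h2
    have hub : ∀ j, |u j| ≤ (m : ℤ) * H ^ 2 := by
      intro j
      have := mulVec_entry_bound Asᵀ (fun i => A i j0) (x := H) (y := H)
        (fun a b => hA _ _) (fun i => hA _ _) hH j
      simpa [sq, Fintype.card_fin] using this
    have hadjb : ∀ a b, |Gs.adjugate a b| ≤ (n'.factorial : ℤ) * E ^ n' := by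
      intro a b
      have h1 := adjugate_abs_le Gs hGe (by positivity) a b
      refine h1.trans ?_
      have f1 : ((Fintype.card ↥s).factorial : ℤ) ≤ (n'.factorial : ℤ) := by
        exact_mod_cast Nat.factorial_le hcard
      have f2 : ((m : ℤ) * H ^ 2 + 1) ^ Fintype.card ↥s ≤ E ^ n' := by
        rw [← hE]
        exact pow_le_pow_right₀ hE1 hcard
      exact mul_le_mul f1 f2 (by positivity) (by positivity)
    have hpb : ∀ j, |p j| ≤ (n' : ℤ) * ((n'.factorial : ℤ) * E ^ n' * ((m : ℤ) * H ^ 2)) := by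
      intro j
      have := mulVec_entry_bound Gs.adjugate u (x := (n'.factorial : ℤ) * E ^ n')
        (y := (m : ℤ) * H ^ 2) hadjb hub (by positivity) j
      refine this.trans ?_
      have : ((Fintype.card ↥s : ℕ) : ℤ) ≤ (n' : ℤ) := by exact_mod_cast hcard
      refine mul_le_mul_of_nonneg_right this ?_
      positivity
    intro j
    have hfinal : (n' : ℤ) * ((n'.factorial : ℤ) * E ^ n' * ((m : ℤ) * H ^ 2)) ≤
        ((n' : ℤ) + 1) * (n'.factorial : ℤ) * E ^ (n' + 1) := by
      rw [pow_succ E n']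
      have h1 : ((m : ℤ) * H ^ 2) ≤ E := by rw [hE]; linarith
      calc (n' : ℤ) * ((n'.factorial : ℤ) * E ^ n' * ((m : ℤ) * H ^ 2))
          = ((n' : ℤ) * (n'.factorial : ℤ) * E ^ n') * ((m : ℤ) * H ^ 2) := by ring
        _ ≤ ((n' : ℤ) * (n'.factorial : ℤ) * E ^ n') * E :=
            mul_le_mul_of_nonneg_left h1 (by positivity)
        _ ≤ (((n' : ℤ) + 1) * (n'.factorial : ℤ) * E ^ n') * E := by
            have : (0:ℤ) ≤ (n'.factorial : ℤ) * E ^ n' * E := by positivity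
            nlinarith [this]
        _ = ((n' : ℤ) + 1) * (n'.factorial : ℤ) * (E ^ n' * E) := by ring
    have hdetfinal : |Gs.det| ≤ ((n' : ℤ) + 1) * (n'.factorial : ℤ) * E ^ (n' + 1) := by
      refine hdetb.trans ?_
      have h5 : (E : ℤ) ^ n' ≤ E ^ (n' + 1) := pow_le_pow_right₀ hE1 (Nat.le_succ n')
      have h3 : (0:ℤ) ≤ (n' : ℤ) * (n'.factorial : ℤ) * E ^ (n' + 1) := by positivity
      have h4 := mul_le_mul_of_nonneg_left h5 (Nat.cast_nonneg (α := ℤ) n'.factorial)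
      linarith
    rcases eq_or_ne j j0 with rfl | hne
    · have : w j = Gs.det := by simp [hw]
      rw [this]
      exact hdetfinal
    · by_cases hmem : j ∈ s
      · have : w j = -(p ⟨j, hmem⟩) := by simp [hw, hne, hmem]
        rw [this, abs_neg]
        exact (hpb _).trans hfinal
      · have : w j = 0 := by simp [hw, hne, hmem]
        rw [this]
        simp only [abs_zero]
        positivity

lemma mono_bound {X c c' : ℤ} {d d' : ℕ} (hX : 1 ≤ X) (h0 : 0 ≤ c) (hc : c ≤ c') (hd : d ≤ d') :
    c * X ^ d ≤ c' * X ^ d' :=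
  mul_le_mul hc (pow_le_pow_right₀ hX hd) (by positivity) (by linarith)

set_option maxHeartbeats 2000000 in
lemma key_induction (m : ℕ) : ∀ n : ℕ, ∃ C D : ℕ,
    ∀ (A : Matrix (Fin m) (Fin n) ℤ) (b : Fin m → ℤ) (H : ℤ),
      (∀ i j, |A i j| ≤ H) → (∀ i, |b i| ≤ H) → 0 ≤ H →
      (∃ z : Fin n → ℤ, A *ᵥ z = b) →
      ∃ z : Fin n → ℤ, A *ᵥ z = b ∧ ∀ i, |z i| ≤ (C : ℤ) * (H + 1) ^ D := by
  intro n
  induction n with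
  | zero =>
    exact ⟨0, 0, fun A b H _ _ _ ⟨z, hz⟩ => ⟨z, hz, fun i => i.elim0⟩⟩
  | succ n ih =>
    obtain ⟨C, D, hCD⟩ := ih
    -- constants
    set k0 : ℕ := (n + 2) * (n + 1).factorial * (m + 1) ^ (n + 2) with hk0
    set a0 : ℕ := (n + 1) * (n + 1).factorial * (m + 1) ^ (n + 2) + 1 with ha0
    refine ⟨C * (k0 + 2) ^ D + k0 + a0, (2 * n + 5) * (D + 1), ?_⟩
    intro A b H hA hb hH ⟨z, hz⟩
    have hX1 : (1 : ℤ) ≤ H + 1 := by linarith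
    set E : ℤ := (m : ℤ) * H ^ 2 + 1 with hE
    have hE0 : (0 : ℤ) ≤ E := by positivity
    have hEle : E ≤ ((m : ℤ) + 1) * (H + 1) ^ 2 := by nlinarith [sq_nonneg H, Int.natCast_nonneg m]
    have hEpow : E ^ (n + 2) ≤ ((m : ℤ) + 1) ^ (n + 2) * (H + 1) ^ (2 * n + 4) := by
      calc E ^ (n + 2) ≤ (((m : ℤ) + 1) * (H + 1) ^ 2) ^ (n + 2) :=
            pow_le_pow_left₀ hE0 hEle _
        _ = ((m : ℤ) + 1) ^ (n + 2) * (H + 1) ^ (2 * n + 4) := by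
            rw [mul_pow, ← pow_mul]
            ring_nf
    by_cases hdep : ∃ c : Fin (n + 1) → ℚ, c ≠ 0 ∧ (A.map (Int.cast : ℤ → ℚ)) *ᵥ c = 0
    · -- dependent columns: use small kernel vector and reduce
      obtain ⟨c, hc, hAc⟩ := hdep
      obtain ⟨w, j0, hwj0, hwker, hwb⟩ := small_kernel A c hc hAc hA hH
      set K : ℤ := ((n + 1 + 1) * (n + 1).factorial : ℤ) * E ^ (n + 1 + 1) with hK
      have hK0 : 0 ≤ K := (abs_nonneg _).trans (hwb j0)
      have hKb : K ≤ (k0 : ℤ) * (H + 1) ^ (2 * n + 4) := by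
        have hcast : ((k0 : ℕ) : ℤ) = ((n : ℤ) + 2) * ((n + 1).factorial : ℤ) * ((m : ℤ) + 1) ^ (n + 2) := by
          rw [hk0]; push_cast; ring
        rw [hK, hcast]
        calc ((n : ℤ) + 1 + 1) * ((n + 1).factorial : ℤ) * E ^ (n + 2)
            ≤ ((n : ℤ) + 1 + 1) * ((n + 1).factorial : ℤ) *
              (((m : ℤ) + 1) ^ (n + 2) * (H + 1) ^ (2 * n + 4)) := by
              refine mul_le_mul_of_nonneg_left hEpow (by positivity)
          _ = ((n : ℤ) + 2) * ((n + 1).factorial : ℤ) * ((m : ℤ) + 1) ^ (n + 2) *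
              (H + 1) ^ (2 * n + 4) := by ring
      -- make kernel vector positive at j0
      set w2 : Fin (n + 1) → ℤ := if 0 < w j0 then w else -w with hw2
      have hw2j0 : 0 < w2 j0 := by
        rcases lt_trichotomy (w j0) 0 with h | h | h
        · rw [hw2, if_neg (by omega)]; simpa using h
        · exact absurd h hwj0
        · rwa [hw2, if_pos h]
      have hw2ker : A *ᵥ w2 = 0 := by
        rw [hw2]
        split
        · exact hwker
        · rw [Matrix.mulVec_neg, hwker, neg_zero]
      have hw2b : ∀ j, |w2 j| ≤ K := by
        intro j
        rw [hw2]
        split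
        · exact hwb j
        · rw [Pi.neg_apply, abs_neg]; exact hwb j
      -- reduce z modulo w2
      set q : ℤ := z j0 / w2 j0 with hq
      set z1 : Fin (n + 1) → ℤ := z - q • w2 with hz1
      have hz1sol : A *ᵥ z1 = b := by
        rw [hz1, Matrix.mulVec_sub, Matrix.mulVec_smul, hw2ker, hz]
        simp
      have hz1j0 : z1 j0 = z j0 % w2 j0 := by
        rw [hz1, Int.emod_def, hq]
        simp [mul_comm]
      have hz1j0nonneg : 0 ≤ z1 j0 := by
        rw [hz1j0]; exact Int.emod_nonneg _ (ne_of_gt hw2j0)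
      have hz1j0lt : z1 j0 < w2 j0 := by
        rw [hz1j0]; exact Int.emod_lt_of_pos _ hw2j0
      have hz1j0b : |z1 j0| ≤ K := by
        rw [abs_of_nonneg hz1j0nonneg]
        have := hw2b j0
        rw [abs_of_pos hw2j0] at this
        omega
      clear_value q z1 w2
      -- reduced system
      set A' : Matrix (Fin m) (Fin n) ℤ := Matrix.of (fun i j => A i (j0.succAbove j)) with hA'
      set b' : Fin m → ℤ := fun i => b i - A i j0 * z1 j0 with hb'
      have hsolvable : ∃ y : Fin n → ℤ, A' *ᵥ y = b' := by
        refine ⟨fun j => z1 (j0.succAbove j), ?_⟩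
        funext i
        have hrow : (A *ᵥ z1) i = A i j0 * z1 j0 + ∑ j : Fin n, A i (j0.succAbove j) * z1 (j0.succAbove j) :=
          Fin.sum_univ_succAbove (fun j => A i j * z1 j) j0
        have : (A *ᵥ z1) i = b i := by rw [hz1sol]
        show ∑ j : Fin n, A' i j * z1 (j0.succAbove j) = b' i
        rw [hb']
        have : ∑ j : Fin n, A i (j0.succAbove j) * z1 (j0.succAbove j) = b i - A i j0 * z1 j0 := by
          omega
        simpa [hA'] using this
      set H' : ℤ := (K + 1) * (H + 1) with hH'
      have hH'0 : 0 ≤ H' := by positivity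
      have hHH' : H ≤ H' := by nlinarith
      have hA'b : ∀ i j, |A' i j| ≤ H' := fun i j => (hA i _).trans hHH'
      have hb'b : ∀ i, |b' i| ≤ H' := by
        intro i
        rw [hb']
        calc |b i - A i j0 * z1 j0| ≤ |b i| + |A i j0 * z1 j0| := abs_sub _ _
          _ ≤ H + H * K := by
              rw [abs_mul]
              have h1 := hA i j0
              have h2 := hz1j0b
              have := mul_le_mul h1 h2 (abs_nonneg _) (le_trans (abs_nonneg _) h1)
              linarith [hb i]
          _ ≤ (K + 1) * (H + 1) := by nlinarith
      obtain ⟨y, hy, hyb⟩ := hCD A' b' H' hA'b hb'b hH'0 hsolvable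
      -- reconstruct
      set zstar : Fin (n + 1) → ℤ := j0.insertNth (z1 j0) y with hzs
      have hzsame : zstar j0 = z1 j0 := by rw [hzs]; simp
      have hzsa : ∀ j : Fin n, zstar (j0.succAbove j) = y j := by
        intro j
        rw [hzs]
        simp
      clear_value zstar
      refine ⟨zstar, ?_, ?_⟩
      · funext i
        have hrow : (A *ᵥ zstar) i =
            A i j0 * zstar j0 +
            ∑ j : Fin n, A i (j0.succAbove j) * zstar (j0.succAbove j) :=
          Fin.sum_univ_succAbove (fun j => A i j * zstar j) j0
        rw [hrow]
        simp only [hzsame]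
        rw [Finset.sum_congr rfl (fun j _ => by rw [hzsa j])]
        have h2 : (A' *ᵥ y) i = b' i := by rw [hy]
        have h3 : ∑ j : Fin n, A i (j0.succAbove j) * y j = b i - A i j0 * z1 j0 := by
          have : (A' *ᵥ y) i = ∑ j : Fin n, A i (j0.succAbove j) * y j := by
            simp [hA', Matrix.mulVec, dotProduct]
          rw [← this, h2, hb']
        rw [h3]
        ring
      · intro i
        have hdle : 2 * n + 4 ≤ (2 * n + 5) * (D + 1) := by
          have h := Nat.mul_le_mul_left (2 * n + 5) (by omega : 1 ≤ D + 1)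
          omega
        have hdle2 : (2 * n + 5) * D ≤ (2 * n + 5) * (D + 1) :=
          Nat.mul_le_mul_left _ (Nat.le_succ D)
        rcases eq_or_ne i j0 with rfl | hne
        · rw [hzsame]
          refine hz1j0b.trans (hKb.trans ?_)
          have h1 : (k0 : ℤ) ≤ ((C * (k0 + 2) ^ D + k0 + a0 : ℕ) : ℤ) := by
            exact_mod_cast (Nat.le_add_left k0 (C * (k0 + 2) ^ D)).trans
              (Nat.le_add_right _ a0)
          exact mono_bound hX1 (Int.natCast_nonneg k0) h1 hdle
        · obtain ⟨j, rfl⟩ := Fin.exists_succAbove_eq hne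
          rw [hzsa j]
          refine (hyb j).trans ?_
          have hH'1 : H' + 1 ≤ ((k0 : ℤ) + 2) * (H + 1) ^ (2 * n + 5) := by
            rw [hH']
            have h1 : (K + 1) * (H + 1) + 1 ≤ (K + 2) * (H + 1) := by nlinarith [hK0, hX1]
            refine h1.trans ?_
            have h2 : K + 2 ≤ ((k0 : ℤ) + 2) * (H + 1) ^ (2 * n + 4) := by
              have h3 : (1 : ℤ) ≤ (H + 1) ^ (2 * n + 4) := one_le_pow₀ hX1
              have h4 : (0 : ℤ) ≤ (k0 : ℤ) := Int.natCast_nonneg k0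
              have h5 : (k0 : ℤ) * 1 ≤ (k0 : ℤ) * (H + 1) ^ (2 * n + 4) :=
                mul_le_mul_of_nonneg_left h3 h4
              linarith [hKb]
            calc (K + 2) * (H + 1) ≤ (((k0 : ℤ) + 2) * (H + 1) ^ (2 * n + 4)) * (H + 1) :=
                  mul_le_mul_of_nonneg_right h2 (by linarith)
              _ = ((k0 : ℤ) + 2) * (H + 1) ^ (2 * n + 5) := by ring
          calc (C : ℤ) * (H' + 1) ^ D ≤ (C : ℤ) * (((k0 : ℤ) + 2) * (H + 1) ^ (2 * n + 5)) ^ D := by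
                refine mul_le_mul_of_nonneg_left (pow_le_pow_left₀ (by linarith) hH'1 D)
                  (Int.natCast_nonneg C)
            _ = ((C : ℤ) * ((k0 : ℤ) + 2) ^ D) * ((H + 1) ^ (2 * n + 5)) ^ D := by
                rw [mul_pow]; ring
            _ = ((C : ℤ) * ((k0 : ℤ) + 2) ^ D) * (H + 1) ^ ((2 * n + 5) * D) := by
                rw [← pow_mul]
            _ ≤ ((C * (k0 + 2) ^ D + k0 + a0 : ℕ) : ℤ) * (H + 1) ^ ((2 * n + 5) * (D + 1)) := by
                have h0' : (0 : ℤ) ≤ (C : ℤ) * ((k0 : ℤ) + 2) ^ D :=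
                  mul_nonneg (Int.natCast_nonneg C)
                    (pow_nonneg (by linarith [Int.natCast_nonneg k0]) D)
                have hc' : (C : ℤ) * ((k0 : ℤ) + 2) ^ D ≤
                    ((C * (k0 + 2) ^ D + k0 + a0 : ℕ) : ℤ) := by
                  have : C * (k0 + 2) ^ D ≤ C * (k0 + 2) ^ D + k0 + a0 :=
                    (Nat.le_add_right _ k0).trans (Nat.le_add_right _ a0)
                  exact_mod_cast this
                exact mono_bound hX1 h0' hc' hdle2
    · -- independent columns: the given solution is already bounded
      push_neg at hdep
      have hind : ∀ v : Fin (n + 1) → ℚ, (A.map (Int.cast : ℤ → ℚ)) *ᵥ v = 0 → v = 0 := by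
        intro v hv
        by_contra hvne
        exact (hdep v hvne) hv
      have hbound := fullrank_bound A b z hz hind hA hb hH
      refine ⟨z, hz, fun i => (hbound i).trans ?_⟩
      have hdle : 2 * n + 4 ≤ (2 * n + 5) * (D + 1) := by
        have h := Nat.mul_le_mul_left (2 * n + 5) (by omega : 1 ≤ D + 1)
        omega
      have hca : ((n + 1) * (n + 1).factorial * (m + 1) ^ (n + 2) : ℕ) ≤
          C * (k0 + 2) ^ D + k0 + a0 := by
        rw [ha0]
        exact (Nat.le_add_right _ 1).trans (Nat.le_add_left _ _)
      calc ((n + 1) * (n + 1).factorial : ℤ) * ((m : ℤ) * H ^ 2 + 1) ^ (n + 1 + 1)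
          ≤ ((n + 1) * (n + 1).factorial : ℤ) *
            (((m : ℤ) + 1) ^ (n + 2) * (H + 1) ^ (2 * n + 4)) := by
            refine mul_le_mul_of_nonneg_left ?_ (by positivity)
            exact hEpow
        _ = (((n + 1) * (n + 1).factorial * (m + 1) ^ (n + 2) : ℕ) : ℤ) *
            (H + 1) ^ (2 * n + 4) := by push_cast; ring
        _ ≤ ((C * (k0 + 2) ^ D + k0 + a0 : ℕ) : ℤ) * (H + 1) ^ ((2 * n + 5) * (D + 1)) := by
            refine mono_bound hX1 (by positivity) ?_ hdle
            exact_mod_cast hca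


/-- **Polynomial bound on integral solutions of integer linear systems (used in
Proposition 2.1.1(i)).** For all `m, n` there is a polynomial `Q` with nonnegative
coefficients such that any solvable system `A z = b` (with `A` an `m × n` integer
matrix, `b ∈ ℤ^m`) has an integer solution with all entries bounded by `Q(H)`, where
`H` is the maximum of the absolute values of the entries of `A` and `b`. -/
theorem stmt_14 (m n : ℕ) :
    ∃ Q : Polynomial ℝ, (∀ i : ℕ, 0 ≤ Q.coeff i) ∧
      ∀ (A : Matrix (Fin m) (Fin n) ℤ) (b : Fin m → ℤ),
        (∃ z : Fin n → ℤ, A.mulVec z = b) →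
        ∃ z : Fin n → ℤ, A.mulVec z = b ∧
          ∀ i : Fin n, (|z i| : ℝ) ≤
            Q.eval ((max (Finset.univ.sup fun p : Fin m × Fin n => (A p.1 p.2).natAbs)
                         (Finset.univ.sup fun i : Fin m => (b i).natAbs) : ℕ) : ℝ) := by
  obtain ⟨C, D, hCD⟩ := key_induction m n
  refine ⟨Polynomial.C (C : ℝ) * (Polynomial.X + 1) ^ D, ?_, ?_⟩
  · intro i
    rw [Polynomial.coeff_C_mul]
    have : ((Polynomial.X + 1 : Polynomial ℝ) ^ D).coeff i = (D.choose i : ℝ) :=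
      Polynomial.coeff_X_add_one_pow ℝ D i
    rw [this]
    positivity
  · intro A b hsol
    set Hn : ℕ := max (Finset.univ.sup fun p : Fin m × Fin n => (A p.1 p.2).natAbs)
      (Finset.univ.sup fun i : Fin m => (b i).natAbs) with hHn
    have hA : ∀ i j, |A i j| ≤ (Hn : ℤ) := by
      intro i j
      rw [Int.abs_eq_natAbs]
      have h1 : (A i j).natAbs ≤ Finset.univ.sup fun p : Fin m × Fin n => (A p.1 p.2).natAbs :=
        Finset.le_sup (f := fun p : Fin m × Fin n => (A p.1 p.2).natAbs) (Finset.mem_univ (i, j))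
      exact_mod_cast h1.trans (le_max_left _ _)
    have hb : ∀ i, |b i| ≤ (Hn : ℤ) := by
      intro i
      rw [Int.abs_eq_natAbs]
      have h1 : (b i).natAbs ≤ Finset.univ.sup fun i : Fin m => (b i).natAbs :=
        Finset.le_sup (f := fun i : Fin m => (b i).natAbs) (Finset.mem_univ i)
      exact_mod_cast h1.trans (le_max_right _ _)
    obtain ⟨z, hz, hzb⟩ := hCD A b (Hn : ℤ) hA hb (Int.natCast_nonneg Hn) hsol
    refine ⟨z, hz, ?_⟩
    intro i
    have heval : (Polynomial.C (C : ℝ) * (Polynomial.X + 1) ^ D).eval ((Hn : ℕ) : ℝ) =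
        (C : ℝ) * ((Hn : ℝ) + 1) ^ D := by
      simp
    rw [heval]
    have := hzb i
    exact_mod_cast this
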